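/- Suppose p(t,x,y) ≤ c₁ t/(|x−y|^d φ(c₁|x−y|)) + c₂ t^{−d/2} exp(−c₃|x−y|²/t) for all t, with φ satisfying the (polycon) scaling conditions. Then there is c₈ > 0 such that for every s, t > 0 and x ∈ ℝ^d, ∫_{B(x,s)^c} p(t,x,y) dy ≤ c₈ t / φ̃(s), where φ̃(s) = s² ∧ φ(s). -/

import Mathlib

open MeasureTheory ENNReal Set

set_option maxHeartbeats 2000000 in
theorem stmt_11 (d : ℕ) (hd : 1 ≤ d) (c β₁ β₂ c₁ c₂ c₃ : ℝ)
    (hc : 1 ≤ c) (hβ₁ : 0 < β₁) (hβ₁₂ : β₁ ≤ β₂) (hβ₂ : β₂ < 2)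
    (hc₁ : 0 < c₁) (hc₂ : 0 < c₂) (hc₃ : 0 < c₃)
    (φ : ℝ → ℝ)
    (hpos : ∀ s : ℝ, 0 < s → 0 < φ s)
    (hmono : StrictMonoOn φ (Set.Ioi (0 : ℝ)))
    (hone : φ 1 = 1)
    (hscale : ∀ r R : ℝ, 0 < r → r < R →
      c⁻¹ * (R / r) ^ β₁ ≤ φ R / φ r ∧ φ R / φ r ≤ c * (R / r) ^ β₂)
    (p : ℝ → EuclideanSpace ℝ (Fin d) → EuclideanSpace ℝ (Fin d) → ℝ)
    (hpnn : ∀ t x y, 0 ≤ p t x y)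
    (hub : ∀ (t : ℝ) x y, 0 < t → x ≠ y →
      p t x y ≤ c₁ * t / (‖x - y‖ ^ d * φ (c₁ * ‖x - y‖))
        + c₂ * t ^ (-(d : ℝ) / 2) * Real.exp (-c₃ * ‖x - y‖ ^ 2 / t)) :
    ∃ c₈ : ℝ, 0 < c₈ ∧ ∀ s t : ℝ, 0 < s → 0 < t →
      ∀ x : EuclideanSpace ℝ (Fin d),
        ∫⁻ y in (Metric.ball x s)ᶜ, ENNReal.ofReal (p t x y)
          ≤ ENNReal.ofReal (c₈ * t / min (s ^ 2) (φ s)) := by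
  classical
  have hc0 : (0:ℝ) < c := lt_of_lt_of_le one_pos hc
  -- the geometric ratio
  set ρ : ℝ := max ((2:ℝ) ^ (-β₁)) (4⁻¹) with hρdef
  have h2β : (1:ℝ) < (2:ℝ) ^ β₁ := Real.one_lt_rpow_iff_of_pos two_pos |>.2 (Or.inl ⟨one_lt_two, hβ₁⟩)
  have hρ0 : (0:ℝ) < ρ := lt_max_of_lt_right (by norm_num)
  have hρ1 : ρ < 1 := by
    apply max_lt _ (by norm_num)
    rw [Real.rpow_neg (by norm_num)]
    exact inv_lt_one_of_one_lt₀ h2β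
  have h1ρ : (0:ℝ) < 1 - ρ := by linarith
  -- κ
  set κ : ℝ := min 1 (c⁻¹ * c₁ ^ β₂) with hκdef
  have hκ0 : 0 < κ := lt_min one_pos (mul_pos (inv_pos.2 hc0) (Real.rpow_pos_of_pos hc₁ _))
  have hκ1 : κ ≤ 1 := min_le_left _ _
  -- K
  set K : ℝ := Real.sqrt ((Nat.factorial (d+2) : ℝ) / (2*c₃)^(d+2)) with hKdef
  have hK0 : 0 < K := Real.sqrt_pos.2 (by positivity)
  have hKsq : K^2 = (Nat.factorial (d+2) : ℝ) / (2*c₃)^(d+2) := Real.sq_sqrt (by positivity)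
  set M : ℝ := c₁ * 2^d * c / κ + c₂ * 2^d * K with hMdef
  have hM0 : 0 < M := by positivity
  -- factorial bound for exp
  have hfact : ∀ a : ℝ, 0 < a → Real.exp (-a) * a^(d+2) ≤ (Nat.factorial (d+2) : ℝ) := by
    intro a ha
    have h1 : a^(d+2) / (Nat.factorial (d+2) : ℝ) ≤ Real.exp a := by
      refine le_trans ?_ (Real.sum_le_exp_of_nonneg ha.le (d+3))
      exact Finset.single_le_sum (f := fun i => a^i / (Nat.factorial i : ℝ))
        (fun i _ => by positivity) (Finset.self_mem_range_succ (d+2))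
    rw [Real.exp_neg, inv_mul_le_iff₀ (Real.exp_pos a)]
    rw [div_le_iff₀ (by positivity)] at h1
    linarith
  -- volume constant
  haveI : Nonempty (Fin d) := ⟨⟨0, hd⟩⟩
  set Vb : ℝ≥0∞ := volume (Metric.ball (0 : EuclideanSpace ℝ (Fin d)) 1) with hVbdef
  have hVb_ne : Vb ≠ ⊤ := measure_ball_lt_top.ne
  set Vr : ℝ := Vb.toReal with hVrdef
  have hVr0 : 0 < Vr := ENNReal.toReal_pos (Metric.measure_ball_pos _ _ one_pos).ne' hVb_ne
  have hVb_eq : Vb = ENNReal.ofReal Vr := (ENNReal.ofReal_toReal hVb_ne).symm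
  refine ⟨M * (1 - ρ)⁻¹ * Vr, mul_pos (mul_pos hM0 (inv_pos.2 h1ρ)) hVr0, ?_⟩
  intro s t hs ht x
  have hφs := hpos s hs
  set mn : ℝ := min (s^2) (φ s) with hmndef
  have hmn0 : 0 < mn := lt_min (by positivity) hφs
  -- φ (c₁ s) ≥ κ φ s
  have hφκ : κ * φ s ≤ φ (c₁ * s) := by
    have hφc : 0 < φ (c₁*s) := hpos _ (by positivity)
    rcases lt_trichotomy c₁ 1 with h | h | h
    · have h1 : c₁ * s < s := by nlinarith
      have h2 := (hscale (c₁*s) s (by positivity) h1).2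
      have hratio : s / (c₁ * s) = c₁⁻¹ := by
        rw [mul_comm c₁ s, ← div_div, div_self hs.ne', one_div]
      rw [hratio, div_le_iff₀ hφc, Real.inv_rpow hc₁.le] at h2
      have hcb : (0:ℝ) < c₁ ^ β₂ := Real.rpow_pos_of_pos hc₁ _
      have hκ2 : κ ≤ c⁻¹ * c₁ ^ β₂ := min_le_right _ _
      have h3 : c⁻¹ * c₁^β₂ * φ s ≤ c⁻¹ * c₁^β₂ * (c * (c₁ ^ β₂)⁻¹ * φ (c₁*s)) :=
        mul_le_mul_of_nonneg_left h2 (by positivity)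
      have h4 : c⁻¹ * c₁^β₂ * (c * (c₁ ^ β₂)⁻¹ * φ (c₁*s)) = φ (c₁*s) := by
        field_simp
      calc κ * φ s ≤ (c⁻¹ * c₁^β₂) * φ s := mul_le_mul_of_nonneg_right hκ2 hφs.le
        _ ≤ φ (c₁*s) := by rw [← h4]; exact h3
    · rw [h, one_mul]; nlinarith
    · have hle : φ s ≤ φ (c₁ * s) :=
        (hmono (mem_Ioi.2 hs) (mem_Ioi.2 (by positivity)) (by nlinarith)).le
      calc κ * φ s ≤ 1 * φ s := mul_le_mul_of_nonneg_right hκ1 hφs.le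
        _ = φ s := one_mul _
        _ ≤ φ (c₁ * s) := hle
  -- rpow power identity
  have hpow2 : ∀ k : ℕ, (((2:ℝ)^k : ℝ)) ^ β₁ = ((2:ℝ)^β₁)^k := by
    intro k
    rw [← Real.rpow_natCast (2:ℝ) k, ← Real.rpow_natCast ((2:ℝ)^β₁) k,
      ← Real.rpow_mul (by norm_num), ← Real.rpow_mul (by norm_num), mul_comm]
  -- growth of φ along dyadic scales
  have hgrow : ∀ k : ℕ, c⁻¹ * ((2:ℝ)^β₁)^k * φ (c₁ * s) ≤ φ (c₁ * (2^k * s)) := by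
    intro k
    have hφc : 0 < φ (c₁ * s) := hpos _ (by positivity)
    rcases Nat.eq_zero_or_pos k with rfl | hk
    · have hcinv : c⁻¹ ≤ 1 := by
        rw [inv_le_one_iff₀]
        right; exact hc
      simp only [pow_zero, one_mul, mul_one]
      nlinarith
    · have h2k : (1:ℝ) < 2^k := by exact_mod_cast Nat.one_lt_two_pow_iff.2 hk.ne'
      have hlt : c₁ * s < c₁ * (2^k * s) := by nlinarith [mul_pos (mul_pos hc₁ hs) (sub_pos.2 h2k)]
      have h2 := (hscale (c₁*s) (c₁*(2^k*s)) (by positivity) hlt).1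
      have hratio : (c₁*(2^k*s)) / (c₁*s) = 2^k := by field_simp
      rw [hratio, hpow2 k, le_div_iff₀ hφc] at h2
      exact h2
  have hρineq : ((2:ℝ)^β₁)⁻¹ ≤ ρ := by
    have h : (2:ℝ)^(-β₁) = ((2:ℝ)^β₁)⁻¹ := Real.rpow_neg (by norm_num) β₁
    rw [hρdef, ← h]; exact le_max_left _ _
  have hρk1 : ∀ k : ℕ, (((2:ℝ)^β₁)⁻¹)^k ≤ ρ^k := fun k =>
    pow_le_pow_left₀ (by positivity) hρineq k
  -- key1 : polynomial part
  have key1 : ∀ k : ℕ, c₁ * t / ((2^k*s)^d * φ (c₁*(2^k*s))) * ((2:ℝ)^(k+1)*s)^d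
      ≤ (c₁ * 2^d * c / κ) * (t / mn) * ρ^k := by
    intro k
    have hrk : (0:ℝ) < 2^k * s := by positivity
    have hφk : 0 < φ (c₁*(2^k*s)) := hpos _ (by positivity)
    have hφc : 0 < φ (c₁ * s) := hpos _ (by positivity)
    have hXk : (0:ℝ) < ((2:ℝ)^β₁)^k := by positivity
    have hLHS : c₁ * t / ((2^k*s)^d * φ (c₁*(2^k*s))) * ((2:ℝ)^(k+1)*s)^d
        = c₁ * t * 2^d / φ (c₁*(2^k*s)) := by
      have h1 : ((2:ℝ)^(k+1)*s)^d = 2^d * ((2^k*s)^d) := by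
        rw [← mul_pow]; congr 1; rw [pow_succ]; ring
      rw [h1]
      field_simp
    rw [hLHS]
    have hden : c⁻¹ * ((2:ℝ)^β₁)^k * (κ * mn) ≤ φ (c₁*(2^k*s)) := by
      calc c⁻¹ * ((2:ℝ)^β₁)^k * (κ * mn)
          ≤ c⁻¹ * ((2:ℝ)^β₁)^k * (κ * φ s) := by
            have : κ * mn ≤ κ * φ s :=
              mul_le_mul_of_nonneg_left (min_le_right _ _) hκ0.le
            exact mul_le_mul_of_nonneg_left this (by positivity)
        _ ≤ c⁻¹ * ((2:ℝ)^β₁)^k * φ (c₁ * s) := mul_le_mul_of_nonneg_left hφκ (by positivity)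
        _ ≤ φ (c₁*(2^k*s)) := hgrow k
    have hdenpos : (0:ℝ) < c⁻¹ * ((2:ℝ)^β₁)^k * (κ * mn) := by positivity
    calc c₁*t*2^d / φ (c₁*(2^k*s))
        ≤ c₁*t*2^d / (c⁻¹ * ((2:ℝ)^β₁)^k * (κ * mn)) :=
          div_le_div_of_nonneg_left (by positivity) hdenpos hden
      _ = (c₁ * 2^d * c / κ) * (t / mn) * ((((2:ℝ)^β₁)⁻¹))^k := by
          field_simp
          rw [← mul_pow, mul_one_div_cancel (by positivity : (2:ℝ)^β₁ ≠ 0), one_pow]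
      _ ≤ (c₁ * 2^d * c / κ) * (t / mn) * ρ^k :=
          mul_le_mul_of_nonneg_left (hρk1 k) (by positivity)
  -- key2 : gaussian part
  have key2 : ∀ k : ℕ, c₂ * t ^ (-(d:ℝ)/2) * Real.exp (-c₃*(2^k*s)^2/t) * ((2:ℝ)^(k+1)*s)^d
      ≤ (c₂ * 2^d * K) * (t / mn) * ρ^k := by
    intro k
    set X : ℝ := (2:ℝ)^k with hXdef
    have hX0 : (0:ℝ) < X := by positivity
    have h4X : ((4:ℝ))^k = X^2 := by
      rw [hXdef, ← pow_mul, show (4:ℝ) = 2^2 by norm_num, ← pow_mul, Nat.mul_comm]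
    have key : t ^ (-(d:ℝ)/2) * Real.exp (-c₃*(X*s)^2/t) * ((2:ℝ)^(k+1)*s)^d
        ≤ 2^d * K * (t/s^2) * ((X^2)⁻¹) := by
      have hG0 : (0:ℝ) ≤ t ^ (-(d:ℝ)/2) * Real.exp (-c₃*(X*s)^2/t) * ((2:ℝ)^(k+1)*s)^d := by
        positivity
      have hsq : (t ^ (-(d:ℝ)/2) * Real.exp (-c₃*(X*s)^2/t) * ((2:ℝ)^(k+1)*s)^d)^2
          ≤ (2^d * K * (t/s^2) * ((X^2)⁻¹))^2 := by
        have ht2 : (t ^ (-(d:ℝ)/2))^2 = (t^d)⁻¹ := by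
          rw [sq, ← Real.rpow_add ht]
          rw [show -(d:ℝ)/2 + -(d:ℝ)/2 = -(d:ℝ) by ring]
          rw [Real.rpow_neg ht.le, Real.rpow_natCast]
        have hexp2 : (Real.exp (-c₃*(X*s)^2/t))^2 = Real.exp (-(2*c₃*(X*s)^2/t)) := by
          rw [← Real.exp_nat_mul]
          congr 1
          push_cast
          ring
        have ha : (0:ℝ) < 2*c₃*(X*s)^2/t := by positivity
        have hexple : Real.exp (-(2*c₃*(X*s)^2/t))
            ≤ (Nat.factorial (d+2) : ℝ) / (2*c₃*(X*s)^2/t)^(d+2) := by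
          have h := hfact _ ha
          rw [le_div_iff₀ (by positivity)]
          linarith
        calc (t ^ (-(d:ℝ)/2) * Real.exp (-c₃*(X*s)^2/t) * ((2:ℝ)^(k+1)*s)^d)^2
            = (t^d)⁻¹ * Real.exp (-(2*c₃*(X*s)^2/t)) * (((2:ℝ)^(k+1)*s)^d)^2 := by
              rw [mul_pow, mul_pow, ht2, hexp2]
          _ ≤ (t^d)⁻¹ * ((Nat.factorial (d+2) : ℝ) / (2*c₃*(X*s)^2/t)^(d+2))
              * (((2:ℝ)^(k+1)*s)^d)^2 := by
              have h1 : (0:ℝ) ≤ (t^d)⁻¹ := by positivity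
              have h2 : (0:ℝ) ≤ (((2:ℝ)^(k+1)*s)^d)^2 := by positivity
              exact mul_le_mul_of_nonneg_right
                (mul_le_mul_of_nonneg_left hexple h1) h2
          _ = (2^d * K * (t/s^2) * ((X^2)⁻¹))^2 := by
              conv_rhs => rw [mul_pow, mul_pow, mul_pow, hKsq]
              rw [show (2:ℝ)^(k+1) = 2 * X by rw [hXdef, pow_succ]; ring]
              field_simp
              ring_nf
              field_simp [ht.ne']
              rw [← mul_pow, mul_one_div_cancel ht.ne', one_pow]
      have h2 := Real.sqrt_le_sqrt hsq
      rwa [Real.sqrt_sq hG0, Real.sqrt_sq (by positivity)] at h2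
    have hX2 : (X^2)⁻¹ = ((4:ℝ)⁻¹)^k := by
      rw [inv_pow, h4X]
    calc c₂ * t ^ (-(d:ℝ)/2) * Real.exp (-c₃*(X*s)^2/t) * ((2:ℝ)^(k+1)*s)^d
        = c₂ * (t ^ (-(d:ℝ)/2) * Real.exp (-c₃*(X*s)^2/t) * ((2:ℝ)^(k+1)*s)^d) := by ring
      _ ≤ c₂ * (2^d * K * (t/s^2) * ((X^2)⁻¹)) := mul_le_mul_of_nonneg_left key hc₂.le
      _ = c₂ * (2^d * K * (t/s^2) * ((4:ℝ)⁻¹)^k) := by rw [hX2]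
      _ ≤ c₂ * (2^d * K * (t/mn) * ρ^k) := by
          have ht1 : t/s^2 ≤ t/mn :=
            div_le_div_of_nonneg_left ht.le hmn0 (min_le_left _ _)
          have ht2 : ((4:ℝ)⁻¹)^k ≤ ρ^k :=
            pow_le_pow_left₀ (by norm_num) (le_max_right _ _) k
          have h1 : (2:ℝ)^d * K * (t/s^2) * ((4:ℝ)⁻¹)^k ≤ 2^d * K * (t/mn) * ρ^k := by
            apply mul_le_mul
            · exact mul_le_mul_of_nonneg_left ht1 (by positivity)
            · exact ht2
            · positivity
            · positivity
          exact mul_le_mul_of_nonneg_left h1 hc₂.le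
      _ = (c₂ * 2^d * K) * (t / mn) * ρ^k := by ring
  -- combined per-scale bound
  have keyF : ∀ k : ℕ,
      (c₁ * t / ((2^k*s)^d * φ (c₁*(2^k*s)))
        + c₂ * t ^ (-(d:ℝ)/2) * Real.exp (-c₃*(2^k*s)^2/t)) * ((2:ℝ)^(k+1)*s)^d
      ≤ M * (t / mn) * ρ^k := by
    intro k
    have h := add_le_add (key1 k) (key2 k)
    calc (c₁ * t / ((2^k*s)^d * φ (c₁*(2^k*s)))
          + c₂ * t ^ (-(d:ℝ)/2) * Real.exp (-c₃*(2^k*s)^2/t)) * ((2:ℝ)^(k+1)*s)^d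
        = c₁ * t / ((2^k*s)^d * φ (c₁*(2^k*s))) * ((2:ℝ)^(k+1)*s)^d
          + c₂ * t ^ (-(d:ℝ)/2) * Real.exp (-c₃*(2^k*s)^2/t) * ((2:ℝ)^(k+1)*s)^d := by ring
      _ ≤ (c₁ * 2^d * c / κ) * (t / mn) * ρ^k + (c₂ * 2^d * K) * (t / mn) * ρ^k := h
      _ = M * (t / mn) * ρ^k := by rw [hMdef]; ring
  -- the annuli
  set Ek : ℕ → Set (EuclideanSpace ℝ (Fin d)) :=
    fun k => Metric.ball x (2^(k+1)*s) \ Metric.ball x (2^k*s) with hEkdef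
  have hEk_meas : ∀ k, MeasurableSet (Ek k) :=
    fun k => measurableSet_ball.diff measurableSet_ball
  -- pointwise bound on the annuli
  have hpt : ∀ k : ℕ, ∀ y, y ∈ Ek k → p t x y ≤
      c₁ * t / ((2^k*s)^d * φ (c₁*(2^k*s)))
        + c₂ * t ^ (-(d:ℝ)/2) * Real.exp (-c₃*(2^k*s)^2/t) := by
    intro k y hy
    obtain ⟨hy1, hy2⟩ := hy
    rw [Metric.mem_ball, not_lt] at hy2
    have hrk : (0:ℝ) < 2^k*s := by positivity
    have hdist : dist y x = ‖x - y‖ := by rw [dist_eq_norm, norm_sub_rev]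
    rw [hdist] at hy2
    have hnorm : (0:ℝ) < ‖x - y‖ := lt_of_lt_of_le hrk hy2
    have hxy : x ≠ y := by
      intro h
      rw [h, sub_self, norm_zero] at hnorm
      exact lt_irrefl _ hnorm
    refine (hub t x y ht hxy).trans (add_le_add ?_ ?_)
    · have hφ1 : 0 < φ (c₁*(2^k*s)) := hpos _ (by positivity)
      have hφ2 : 0 < φ (c₁*‖x-y‖) := hpos _ (by positivity)
      apply div_le_div_of_nonneg_left (by positivity)
        (mul_pos (pow_pos hrk d) hφ1)
      apply mul_le_mul (pow_le_pow_left₀ hrk.le hy2 d) ?_ hφ1.le (by positivity)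
      exact hmono.monotoneOn (mem_Ioi.2 (by positivity)) (mem_Ioi.2 (by positivity))
        (by nlinarith)
    · apply mul_le_mul_of_nonneg_left _ (by positivity)
      apply Real.exp_le_exp.2
      have hsq : (2^k*s)^2 ≤ ‖x-y‖^2 := pow_le_pow_left₀ hrk.le hy2 2
      rw [div_le_div_iff₀ ht ht]
      nlinarith [mul_le_mul_of_nonneg_right (mul_le_mul_of_nonneg_left hsq hc₃.le) ht.le]
  -- covering
  have hcover : (Metric.ball x s)ᶜ ⊆ ⋃ k : ℕ, Ek k := by
    intro y hy
    rw [mem_compl_iff, Metric.mem_ball, not_lt] at hy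
    have hex : ∃ k : ℕ, dist y x < 2^(k+1)*s := by
      obtain ⟨n, hn⟩ := pow_unbounded_of_one_lt (dist y x / s) one_lt_two
      refine ⟨n, ?_⟩
      rw [div_lt_iff₀ hs] at hn
      have h2 : (2:ℝ)^n * s ≤ 2^(n+1)*s :=
        mul_le_mul_of_nonneg_right (pow_le_pow_right₀ one_le_two (Nat.le_succ n)) hs.le
      linarith
    refine mem_iUnion.2 ⟨Nat.find hex, Metric.mem_ball.2 (Nat.find_spec hex), ?_⟩
    simp only [Metric.mem_ball, not_lt]
    rcases Nat.eq_zero_or_pos (Nat.find hex) with h0 | h0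
    · rw [h0, pow_zero, one_mul]; exact hy
    · have hmin := Nat.find_min hex (Nat.sub_lt h0 one_pos)
      rw [not_lt] at hmin
      have heq : Nat.find hex - 1 + 1 = Nat.find hex := by omega
      rwa [heq] at hmin
  -- volume of annuli
  have hν : ∀ k : ℕ, volume (Ek k) ≤ ENNReal.ofReal (((2:ℝ)^(k+1)*s)^d) * Vb := by
    intro k
    calc volume (Ek k) ≤ volume (Metric.ball x (2^(k+1)*s)) := measure_mono diff_subset
      _ = ENNReal.ofReal (((2:ℝ)^(k+1)*s)^d) * Vb := by
          rw [hVbdef, Measure.addHaar_ball volume x (by positivity : (0:ℝ) ≤ 2^(k+1)*s),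
            finrank_euclideanSpace_fin]
  -- per-annulus integral bound
  have hint : ∀ k : ℕ, ∫⁻ y in Ek k, ENNReal.ofReal (p t x y)
      ≤ ENNReal.ofReal (M * (t/mn)) * (ENNReal.ofReal ρ)^k * Vb := by
    intro k
    have hφk : 0 < φ (c₁*(2^k*s)) := hpos _ (by positivity)
    have hFk0 : 0 ≤ c₁ * t / ((2^k*s)^d * φ (c₁*(2^k*s)))
        + c₂ * t ^ (-(d:ℝ)/2) * Real.exp (-c₃*(2^k*s)^2/t) := by positivity
    calc ∫⁻ y in Ek k, ENNReal.ofReal (p t x y)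
        ≤ ∫⁻ _ in Ek k, ENNReal.ofReal (c₁ * t / ((2^k*s)^d * φ (c₁*(2^k*s)))
            + c₂ * t ^ (-(d:ℝ)/2) * Real.exp (-c₃*(2^k*s)^2/t)) :=
          setLIntegral_mono' (hEk_meas k)
            (fun y hy => ENNReal.ofReal_le_ofReal (hpt k y hy))
      _ = ENNReal.ofReal (c₁ * t / ((2^k*s)^d * φ (c₁*(2^k*s)))
            + c₂ * t ^ (-(d:ℝ)/2) * Real.exp (-c₃*(2^k*s)^2/t)) * volume (Ek k) :=
          setLIntegral_const _ _
      _ ≤ ENNReal.ofReal (c₁ * t / ((2^k*s)^d * φ (c₁*(2^k*s)))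
            + c₂ * t ^ (-(d:ℝ)/2) * Real.exp (-c₃*(2^k*s)^2/t))
          * (ENNReal.ofReal (((2:ℝ)^(k+1)*s)^d) * Vb) := mul_le_mul_right (hν k) _
      _ = ENNReal.ofReal ((c₁ * t / ((2^k*s)^d * φ (c₁*(2^k*s)))
            + c₂ * t ^ (-(d:ℝ)/2) * Real.exp (-c₃*(2^k*s)^2/t)) * ((2:ℝ)^(k+1)*s)^d)
          * Vb := by rw [← mul_assoc, ← ENNReal.ofReal_mul hFk0]
      _ ≤ ENNReal.ofReal (M * (t/mn) * ρ^k) * Vb :=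
          mul_le_mul_left (ENNReal.ofReal_le_ofReal (keyF k)) _
      _ = ENNReal.ofReal (M * (t/mn)) * (ENNReal.ofReal ρ)^k * Vb := by
          rw [ENNReal.ofReal_mul (by positivity), ENNReal.ofReal_pow hρ0.le]
  -- main computation
  calc ∫⁻ y in (Metric.ball x s)ᶜ, ENNReal.ofReal (p t x y)
      ≤ ∫⁻ y in ⋃ k : ℕ, Ek k, ENNReal.ofReal (p t x y) := lintegral_mono_set hcover
    _ ≤ ∑' k : ℕ, ∫⁻ y in Ek k, ENNReal.ofReal (p t x y) := lintegral_iUnion_le _ _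
    _ ≤ ∑' k : ℕ, ENNReal.ofReal (M * (t/mn)) * (ENNReal.ofReal ρ)^k * Vb :=
        ENNReal.tsum_le_tsum hint
    _ = ∑' k : ℕ, (ENNReal.ofReal (M * (t/mn)) * Vb) * (ENNReal.ofReal ρ)^k := by
        apply tsum_congr
        intro k
        ring
    _ = (ENNReal.ofReal (M * (t/mn)) * Vb) * ∑' k : ℕ, (ENNReal.ofReal ρ)^k :=
        ENNReal.tsum_mul_left
    _ = (ENNReal.ofReal (M * (t/mn)) * Vb) * (1 - ENNReal.ofReal ρ)⁻¹ := by
        rw [ENNReal.tsum_geometric]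
    _ ≤ ENNReal.ofReal ((M * (1 - ρ)⁻¹ * Vr) * t / mn) := by
        have h1 : (1 : ℝ≥0∞) - ENNReal.ofReal ρ = ENNReal.ofReal (1-ρ) := by
          rw [← ENNReal.ofReal_one, ← ENNReal.ofReal_sub _ hρ0.le]
        rw [h1, ← ENNReal.ofReal_inv_of_pos h1ρ, hVb_eq,
          ← ENNReal.ofReal_mul (by positivity), ← ENNReal.ofReal_mul (by positivity)]
        apply ENNReal.ofReal_le_ofReal
        rw [show (M * (1 - ρ)⁻¹ * Vr) * t / mn = M * (t/mn) * Vr * (1-ρ)⁻¹ by ring]
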